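/- Let K be a number field of degree d. There exists a constant κ > 0, depending only on K, such that every fractional ideal 𝔞 of K has a ℤ-basis α₁, …, α_d with max over archimedean places v of |α_i|_v at most κ·(N𝔞)^{1/d} for each i. -/

import Mathlib

open NumberField
open scoped nonZeroDivisors

open NumberField.InfinitePlace NumberField.mixedEmbedding MeasureTheory Module ZSpan
open scoped ENNReal NNReal

open NumberField NumberField.InfinitePlace NumberField.mixedEmbedding MeasureTheory Module ZSpan
open scoped nonZeroDivisors ENNReal NNReal

theorem aux_minkowski (K : Type*) [Field K] [NumberField K] :
    ∃ c : ℝ, 0 < c ∧ ∀ I : (FractionalIdeal (𝓞 K)⁰ K)ˣ,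
      ∃ γ ∈ (I : FractionalIdeal (𝓞 K)⁰ K), γ ≠ 0 ∧ ∀ w : InfinitePlace K,
        w γ ≤ c * (FractionalIdeal.absNorm I.1 : ℝ) ^ ((1 : ℝ) / (finrank ℚ K : ℝ)) := by
  classical
  set d : ℕ := finrank ℚ K with hd_def
  have hd : 0 < d := finrank_pos
  have hdR : (0:ℝ) < d := Nat.cast_pos.mpr hd
  set V : ℝ≥0∞ := volume (fundamentalDomain (latticeBasis K)) *
      (2 : ℝ≥0∞) ^ (finrank ℝ (mixedSpace K)) with hV_def
  have hV0 : V ≠ 0 := by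
    refine mul_ne_zero (ZSpan.measure_fundamentalDomain_ne_zero _) ?_
    exact (ENNReal.pow_ne_zero two_ne_zero _)
  have hVtop : V ≠ ⊤ := by
    refine ENNReal.mul_ne_top ?_ ?_
    · exact ((fundamentalDomain_isBounded _).measure_lt_top).ne
    · exact (ENNReal.pow_lt_top (lt_top_iff_ne_top.mpr ENNReal.ofNat_ne_top)).ne
  set F : ℝ≥0∞ := (convexBodyLTFactor K : ℝ≥0∞) with hF_def
  have hF0 : F ≠ 0 := by
    simp only [hF_def, ne_eq, ENNReal.coe_eq_zero]
    exact convexBodyLTFactor_ne_zero K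
  have hFtop : F ≠ ⊤ := ENNReal.coe_ne_top
  set R : ℝ := (V / F).toReal with hR_def
  have hR : 0 ≤ R := ENNReal.toReal_nonneg
  refine ⟨(R + 1) ^ ((1:ℝ)/d), Real.rpow_pos_of_pos (by linarith) _, fun I => ?_⟩
  set N : ℝ := (FractionalIdeal.absNorm I.1 : ℝ) with hN_def
  have hN : 0 < N := by
    have := FractionalIdeal.absNorm_eq_zero_iff (I := I.1)
    have h1 : FractionalIdeal.absNorm I.1 ≠ 0 := fun h => I.ne_zero (this.mp h)
    have h2 : (0:ℚ) ≤ FractionalIdeal.absNorm I.1 := FractionalIdeal.absNorm_nonneg I.1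
    have h3 : (0:ℚ) < FractionalIdeal.absNorm I.1 := lt_of_le_of_ne h2 (Ne.symm h1)
    rw [hN_def]
    exact_mod_cast h3
  set t : ℝ := (R + 1) ^ ((1:ℝ)/d) * N ^ ((1:ℝ)/d) with ht_def
  have ht : 0 < t := mul_pos (Real.rpow_pos_of_pos (by linarith) _)
    (Real.rpow_pos_of_pos hN _)
  have htd : t ^ d = (R + 1) * N := by
    rw [ht_def, mul_pow, ← Real.rpow_natCast ((R+1) ^ ((1:ℝ)/d)) d,
      ← Real.rpow_natCast (N ^ ((1:ℝ)/d)) d, ← Real.rpow_mul (by linarith),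
      ← Real.rpow_mul hN.le, one_div, inv_mul_cancel₀ (ne_of_gt hdR),
      Real.rpow_one, Real.rpow_one]
  have key : minkowskiBound K I < volume (convexBodyLT K (fun _ => t.toNNReal)) := by
    have hvol : volume (convexBodyLT K (fun _ => t.toNNReal)) =
        F * ENNReal.ofReal (t ^ d) := by
      rw [convexBodyLT_volume]
      congr 1
      rw [Finset.prod_pow_eq_pow_sum, sum_mult_eq, ← hd_def,
        ENNReal.ofReal_pow ht.le]
      rfl
    have hmb : minkowskiBound K I = F * ENNReal.ofReal (N * R) := by
      have h1 : ENNReal.ofReal R = V / F :=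
        ENNReal.ofReal_toReal (ENNReal.div_lt_top hVtop hF0).ne
      have h2 : F * (V / F) = V := ENNReal.mul_div_cancel hF0 hFtop
      rw [minkowskiBound, volume_fundamentalDomain_fractionalIdealLatticeBasis,
        ← hN_def, ENNReal.ofReal_mul hN.le, h1,
        mul_left_comm F (ENNReal.ofReal N) (V / F), h2, mul_assoc, ← hV_def]
    rw [hvol, hmb, htd]
    refine ENNReal.mul_lt_mul_iff_right hF0 hFtop |>.mpr ?_
    refine ENNReal.ofReal_lt_ofReal_iff (by nlinarith) |>.mpr ?_
    nlinarith
  obtain ⟨γ, hγI, hγ0, hγw⟩ := exists_ne_zero_mem_ideal_lt K I key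
  refine ⟨γ, hγI, hγ0, fun w => ?_⟩
  have := hγw w
  rw [Real.coe_toNNReal _ ht.le] at this
  calc w γ ≤ t := this.le
    _ = _ := by rw [ht_def]

noncomputable def gAux (K : Type*) [Field K] [NumberField K]
    (J : FractionalIdeal (𝓞 K)⁰ K) : ℝ≥0 :=
  Finset.univ.sup (fun p : (Module.Free.ChooseBasisIndex ℤ J) × InfinitePlace K =>
    (p.2 ((fractionalIdealBasis K J p.1 : K))).toNNReal)

open FractionalIdeal in
/-- **A "reduced" ℤ-basis of a fractional ideal.**
Let `K` be a number field of degree `d`. There is a constant `κ > 0`, depending only on `K`,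
such that every nonzero fractional ideal `I` of `K` has a `ℤ`-basis `α₁, …, α_d` with
`|αᵢ|_v ≤ κ · (N I)^(1/d)` for every archimedean place `v` and every `i`. -/
theorem reduced_int_basis_of_fractional_ideal
    (K : Type*) [Field K] [NumberField K] :
    ∃ κ : ℝ, 0 < κ ∧
      ∀ I : FractionalIdeal (𝓞 K)⁰ K, I ≠ 0 →
        ∃ b : Basis (Fin (Module.finrank ℚ K)) ℤ (I : Submodule (𝓞 K) K),
          ∀ i, ∀ v : InfinitePlace K,
            v (b i : K) ≤ κ * (FractionalIdeal.absNorm I : ℝ) ^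
              ((1 : ℝ) / (Module.finrank ℚ K : ℝ)) := by
  classical
  obtain ⟨c₁, hc₁, hmk⟩ := aux_minkowski K
  set d : ℕ := finrank ℚ K with hd_def
  have hd : 0 < d := finrank_pos
  have hdR : (0:ℝ) < d := Nat.cast_pos.mpr hd
  set M : ℕ := ⌈c₁ ^ d⌉₊ with hM_def
  set g : Ideal (𝓞 K) → ℝ≥0 := fun 𝔟 =>
    gAux K ((𝔟 : FractionalIdeal (𝓞 K)⁰ K)⁻¹) with hg_def
  set T : Finset (Ideal (𝓞 K)) := (Ideal.finite_setOf_absNorm_le (S := 𝓞 K) M).toFinset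
    with hT_def
  set c₂ : ℝ := 1 + (T.sup g : ℝ≥0) with hc₂_def
  have hc₂ : 0 < c₂ := by positivity
  refine ⟨c₁ * c₂, mul_pos hc₁ hc₂, fun I hI => ?_⟩
  set N : ℝ := (FractionalIdeal.absNorm I : ℝ) with hN_def
  have hN : 0 < N := by
    have h1 : FractionalIdeal.absNorm I ≠ 0 := fun h => hI (absNorm_eq_zero_iff.mp h)
    have h3 : (0:ℚ) < FractionalIdeal.absNorm I :=
      lt_of_le_of_ne (absNorm_nonneg I) (Ne.symm h1)
    rw [hN_def]; exact_mod_cast h3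
  obtain ⟨γ, hγI, hγ0, hγw⟩ := hmk (Units.mk0 I hI)
  simp only [Units.val_mk0] at hγw
  rw [← hN_def] at hγw
  -- the companion ideal
  have hle : spanSingleton (𝓞 K)⁰ γ * I⁻¹ ≤ 1 := by
    calc spanSingleton (𝓞 K)⁰ γ * I⁻¹ ≤ I * I⁻¹ := by
          exact mul_left_mono (a := I⁻¹) (spanSingleton_le_iff_mem.mpr hγI)
      _ = 1 := mul_inv_cancel₀ hI
  obtain ⟨𝔟, h𝔟⟩ := le_one_iff_exists_coeIdeal.mp hle
  set J : FractionalIdeal (𝓞 K)⁰ K := ((𝔟 : FractionalIdeal (𝓞 K)⁰ K))⁻¹ with hJ_def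
  have hJ : J = spanSingleton (𝓞 K)⁰ γ⁻¹ * I := by
    rw [hJ_def, h𝔟, mul_inv, spanSingleton_inv, inv_inv]
  have hJ0 : J ≠ 0 := by
    rw [hJ]
    exact mul_ne_zero (spanSingleton_ne_zero_iff.mpr (inv_ne_zero hγ0)) hI
  have hmem : ∀ x : K, x ∈ J ↔ γ * x ∈ I := by
    intro x
    rw [hJ, mem_singleton_mul]
    constructor
    · rintro ⟨y, hy, rfl⟩
      rwa [← mul_assoc, mul_inv_cancel₀ hγ0, one_mul]
    · intro h
      exact ⟨γ * x, h, by rw [← mul_assoc, inv_mul_cancel₀ hγ0, one_mul]⟩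
  -- norm bound on 𝔟
  have hprod : ((|Algebra.norm ℚ γ| : ℚ) : ℝ) ≤ c₁ ^ d * N := by
    have h1 : ((|Algebra.norm ℚ γ| : ℚ) : ℝ) = ∏ w : InfinitePlace K, w γ ^ mult w :=
      (prod_eq_abs_norm γ).symm
    have h2 : ∏ w : InfinitePlace K, w γ ^ mult w ≤
        ∏ w : InfinitePlace K, (c₁ * N ^ ((1:ℝ)/d)) ^ mult w := by
      refine Finset.prod_le_prod (fun w _ => pow_nonneg (apply_nonneg w γ) _)
        (fun w _ => pow_le_pow_left₀ (apply_nonneg w γ) (hγw w) _)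
    have h3 : ∏ w : InfinitePlace K, (c₁ * N ^ ((1:ℝ)/d)) ^ mult w = c₁ ^ d * N := by
      rw [Finset.prod_pow_eq_pow_sum, sum_mult_eq, ← hd_def, mul_pow,
        ← Real.rpow_natCast (N ^ ((1:ℝ)/d)) d, ← Real.rpow_mul hN.le,
        one_div, inv_mul_cancel₀ (ne_of_gt hdR), Real.rpow_one]
    calc ((|Algebra.norm ℚ γ| : ℚ) : ℝ) = _ := h1
      _ ≤ _ := h2
      _ = _ := h3
  have h𝔟M : 𝔟 ∈ T := by
    have e2 : ((Ideal.absNorm 𝔟 : ℚ)) =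
        |Algebra.norm ℚ γ| * (FractionalIdeal.absNorm I)⁻¹ := by
      rw [← coeIdeal_absNorm (R := 𝓞 K) (K := K) 𝔟, h𝔟, _root_.map_mul, map_inv₀,
        absNorm_span_singleton]
    have e3 : ((Ideal.absNorm 𝔟 : ℚ) : ℝ) = ((|Algebra.norm ℚ γ| : ℚ) : ℝ) * N⁻¹ := by
      rw [e2, hN_def]; push_cast; ring
    have hle2 : ((Ideal.absNorm 𝔟 : ℚ) : ℝ) ≤ c₁ ^ d := by
      rw [e3, ← div_eq_mul_inv, div_le_iff₀ hN]
      exact hprod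
    have h4 : ((Ideal.absNorm 𝔟 : ℚ) : ℝ) ≤ (M : ℝ) := hle2.trans (Nat.le_ceil _)
    rw [hT_def, Set.Finite.mem_toFinset, Set.mem_setOf_eq]
    exact_mod_cast h4
  -- the basis of J and transport
  set e := fractionalIdealBasis K J with he_def
  have hbound : ∀ (j) (v : InfinitePlace K), v ((e j : K)) ≤ ((T.sup g : ℝ≥0) : ℝ) := by
    intro j v
    have h1 : (v ((e j : K))).toNNReal ≤ g 𝔟 := Finset.le_sup (f := fun p :
        (Module.Free.ChooseBasisIndex ℤ J) × InfinitePlace K =>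
      (p.2 ((fractionalIdealBasis K J p.1 : K))).toNNReal)
      (Finset.mem_univ (j, v))
    have h2 : g 𝔟 ≤ T.sup g := Finset.le_sup h𝔟M
    have h3 := h1.trans h2
    calc v ((e j : K)) = ((v ((e j : K))).toNNReal : ℝ) :=
          (Real.coe_toNNReal _ (apply_nonneg _ _)).symm
      _ ≤ _ := by exact_mod_cast h3
  -- the linear equiv
  set μ : (J : Submodule (𝓞 K) K) ≃ₗ[ℤ] (I : Submodule (𝓞 K) K) :=
    { toFun := fun x => ⟨γ * (x : K), (hmem x).mp x.2⟩
      map_add' := fun x y => Subtype.ext (by simp [mul_add])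
      map_smul' := fun z x => Subtype.ext (by
        show γ * ((z • x : _) : K) = z • (γ * (x : K))
        rw [Submodule.coe_smul_of_tower, zsmul_eq_mul', zsmul_eq_mul', mul_assoc])
      invFun := fun y => ⟨γ⁻¹ * (y : K), (hmem _).mpr (by
        rw [← mul_assoc, mul_inv_cancel₀ hγ0, one_mul]; exact y.2)⟩
      left_inv := fun x => Subtype.ext (by
        simp only; rw [← mul_assoc, inv_mul_cancel₀ hγ0, one_mul])
      right_inv := fun y => Subtype.ext (by
        simp only; rw [← mul_assoc, mul_inv_cancel₀ hγ0, one_mul]) } with hμ_def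
  have hcard : Fintype.card (Module.Free.ChooseBasisIndex ℤ J) = d := by
    rw [← Module.finrank_eq_card_chooseBasisIndex]
    exact (fractionalIdeal_rank K (Units.mk0 J hJ0)).trans (RingOfIntegers.rank K)
  set eqv : Module.Free.ChooseBasisIndex ℤ J ≃ Fin d := Fintype.equivFinOfCardEq hcard
    with heqv_def
  refine ⟨(e.map μ).reindex eqv, fun i v => ?_⟩
  rw [Basis.reindex_apply, Basis.map_apply]
  have hval : ((μ (e (eqv.symm i)) : K)) = γ * (e (eqv.symm i) : K) := rfl
  rw [hval, _root_.map_mul]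
  have hb := hbound (eqv.symm i) v
  have hγv := hγw v
  calc v γ * v ((e (eqv.symm i) : K))
      ≤ (c₁ * N ^ ((1:ℝ)/d)) * c₂ := by
        refine mul_le_mul hγv (hb.trans ?_) (apply_nonneg _ _) ?_
        · rw [hc₂_def]; linarith
        · positivity
    _ = c₁ * c₂ * N ^ ((1:ℝ)/d) := by ring
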